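/- Let r be a directed graph on a finite vertex type V, let W̄, X̄, V2 be vertex sets with W̄ disjoint from V2 and from X̄, and let N⁺(W̄) := { v | ∃ w ∈ W̄, r w v } be the set of out-neighbors of W̄. Then a vertex set D is of minimum cardinality among all (W̄ ∪ X̄)–V2 disconnecting sets satisfying D ∩ W̄ = ∅ if and only if D is of minimum cardinality among all (N⁺(W̄) ∪ X̄)–V2 disconnecting sets. -/

import Mathlib

/-- A path in a directed graph `r`: a nonempty duplicate-free list of vertices
in which every pair of consecutive entries is related by `r`. -/
def IsPath {V : Type*} (r : V → V → Prop) (l : List V) : Prop :=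
  l ≠ [] ∧ l.Nodup ∧ l.Chain' r

/-- A path from the vertex set `V1` to the vertex set `V2`. -/
def IsPathFromTo {V : Type*} (r : V → V → Prop) (V1 V2 : Set V) (l : List V) : Prop :=
  IsPath r l ∧ ∀ h : l ≠ [], l.head h ∈ V1 ∧ l.getLast h ∈ V2

/-- `D` is a `V1`–`V2` disconnecting set: every path from `V1` to `V2`
contains a vertex of `D`. -/
def Disconnects {V : Type*} (r : V → V → Prop) (V1 V2 D : Set V) : Prop :=
  ∀ l : List V, IsPathFromTo r V1 V2 l → ∃ v ∈ D, v ∈ l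

private lemma mkPath {V : Type*} {r : V → V → Prop} {V1 V2 : Set V} {l : List V}
    (hne : l ≠ []) (hnd : l.Nodup) (hch : l.Chain' r)
    (h1 : l.head hne ∈ V1) (h2 : l.getLast hne ∈ V2) : IsPathFromTo r V1 V2 l :=
  ⟨⟨hne, hnd, hch⟩, fun _ => ⟨h1, h2⟩⟩

/-- Lemma C: a disconnecting set for N⁺(W̄)∪X̄ also disconnects W̄∪X̄. -/
private lemma lemC {V : Type*} {r : V → V → Prop} {Wb Xb V2 D : Set V}
    (hWV2 : Disjoint Wb V2)
    (hD : Disconnects r ({v | ∃ w ∈ Wb, r w v} ∪ Xb) V2 D) :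
    Disconnects r (Wb ∪ Xb) V2 D := by
  intro l hl
  obtain ⟨⟨hne, hnd, hch⟩, hends⟩ := hl
  obtain ⟨hhead, hlast⟩ := hends hne
  rcases hhead with hW | hX
  · cases l with
    | nil => exact absurd rfl hne
    | cons w t =>
      cases t with
      | nil =>
        exact absurd hlast (Set.disjoint_left.mp hWV2 hW)
      | cons u t' =>
        have hru : r w u := (List.isChain_cons_cons.mp hch).1
        have hlast' : (u :: t').getLast (List.cons_ne_nil u t') ∈ V2 := by
          rwa [List.getLast_cons (List.cons_ne_nil u t')] at hlast
        obtain ⟨v, hvD, hvl⟩ := hD (u :: t')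
          (mkPath (List.cons_ne_nil u t') (List.nodup_cons.mp hnd).2
            (List.isChain_cons_cons.mp hch).2 (Or.inl ⟨w, hW, hru⟩) hlast')
        exact ⟨v, hvD, List.mem_cons_of_mem w hvl⟩
  · exact hD l (mkPath hne hnd hch (Or.inr hX) hlast)

/-- Lemma A: a disconnecting set for W̄∪X̄ avoiding W̄ disconnects N⁺(W̄)∪X̄. -/
private lemma lemA {V : Type*} {r : V → V → Prop} {Wb Xb V2 D : Set V}
    (hDW : D ∩ Wb = ∅)
    (hD : Disconnects r (Wb ∪ Xb) V2 D) :
    Disconnects r ({v | ∃ w ∈ Wb, r w v} ∪ Xb) V2 D := by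
  intro l hl
  obtain ⟨⟨hne, hnd, hch⟩, hends⟩ := hl
  obtain ⟨hhead, hlast⟩ := hends hne
  rcases hhead with hN | hX
  · obtain ⟨w, hw, hrw⟩ := hN
    by_cases hwl : w ∈ l
    · obtain ⟨s, t, rfl⟩ := List.append_of_mem hwl
      have hsuf : (w :: t) <:+ s ++ w :: t := List.suffix_append s (w :: t)
      have hlast' : (w :: t).getLast (List.cons_ne_nil w t) ∈ V2 := by
        rwa [List.getLast_append_of_ne_nil _ (List.cons_ne_nil w t)] at hlast
      obtain ⟨v, hvD, hvl⟩ := hD (w :: t)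
        (mkPath (List.cons_ne_nil w t) (hnd.sublist hsuf.sublist)
          (hch.suffix hsuf) (Or.inl hw) hlast')
      exact ⟨v, hvD, hsuf.subset hvl⟩
    · have hch2 : (w :: l).Chain' r := by
        refine List.isChain_cons.mpr ⟨fun y hy => ?_, hch⟩
        have : l.head? = some (l.head hne) := List.head?_eq_head hne
        rw [this, Option.mem_some_iff] at hy
        exact hy ▸ hrw
      have hlast' : (w :: l).getLast (List.cons_ne_nil w l) ∈ V2 := by
        rwa [List.getLast_cons hne]
      obtain ⟨v, hvD, hvl⟩ := hD (w :: l)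
        (mkPath (List.cons_ne_nil w l) (List.nodup_cons.mpr ⟨hwl, hnd⟩)
          hch2 (Or.inl hw) hlast')
      rcases List.mem_cons.mp hvl with rfl | hvl'
      · exact absurd (Set.mem_inter hvD hw) (by rw [hDW]; exact not_false)
      · exact ⟨v, hvD, hvl'⟩
  · exact hD l (mkPath hne hnd hch (Or.inr hX) hlast)

/-- Lemma B: removing W̄ from a disconnecting set for N⁺(W̄)∪X̄ still disconnects. -/
private lemma lemB {V : Type*} {r : V → V → Prop} {Wb Xb V2 D : Set V}
    (hWV2 : Disjoint Wb V2)
    (hD : Disconnects r ({v | ∃ w ∈ Wb, r w v} ∪ Xb) V2 D) :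
    Disconnects r ({v | ∃ w ∈ Wb, r w v} ∪ Xb) V2 (D \ Wb) := by
  suffices h : ∀ n (l : List V), l.length ≤ n →
      IsPathFromTo r ({v | ∃ w ∈ Wb, r w v} ∪ Xb) V2 l → ∃ v ∈ D \ Wb, v ∈ l by
    intro l hl; exact h l.length l le_rfl hl
  intro n
  induction n with
  | zero =>
    intro l hlen hl
    exact absurd (List.length_eq_zero_iff.mp (Nat.le_zero.mp hlen)) hl.1.1
  | succ n ih =>
    intro l hlen hl
    obtain ⟨v, hvD, hvl⟩ := hD l hl
    by_cases hvW : v ∈ Wb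
    · obtain ⟨s, t, rfl⟩ := List.append_of_mem hvl
      obtain ⟨⟨hne, hnd, hch⟩, hends⟩ := hl
      obtain ⟨_, hlast⟩ := hends hne
      cases t with
      | nil =>
        have : (s ++ [v]).getLast hne = v := by
          rw [List.getLast_append_of_ne_nil _ (List.cons_ne_nil v [])]; rfl
        rw [this] at hlast
        exact absurd hlast (Set.disjoint_left.mp hWV2 hvW)
      | cons u t' =>
        have hsuf : (v :: u :: t') <:+ s ++ v :: u :: t' :=
          List.suffix_append s (v :: u :: t')
        have hch2 := hch.suffix hsuf
        have hru : r v u := (List.isChain_cons_cons.mp hch2).1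
        have hsuf2 : (u :: t') <:+ s ++ v :: u :: t' :=
          (List.suffix_cons v (u :: t')).trans hsuf
        have hlast' : (u :: t').getLast (List.cons_ne_nil u t') ∈ V2 := by
          rw [List.getLast_append_of_ne_nil _ (List.cons_ne_nil v _),
            List.getLast_cons (List.cons_ne_nil u t')] at hlast
          exact hlast
        have hlen' : (u :: t').length ≤ n := by
          simp only [List.length_append, List.length_cons] at hlen ⊢
          omega
        obtain ⟨v', hv', hmem⟩ := ih (u :: t') hlen'
          (mkPath (List.cons_ne_nil u t') (hnd.sublist hsuf2.sublist)
            (List.isChain_cons_cons.mp hch2).2 (Or.inl ⟨v, hvW, hru⟩) hlast')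
        exact ⟨v', hv', hsuf2.subset hmem⟩
    · exact ⟨v, ⟨hvD, hvW⟩, hvl⟩

theorem stmt13 {V : Type*} [Fintype V] (r : V → V → Prop) (Wb Xb V2 : Set V)
    (hWV2 : Disjoint Wb V2) (hWX : Disjoint Wb Xb) (D : Set V) :
    (Disconnects r (Wb ∪ Xb) V2 D ∧ D ∩ Wb = ∅ ∧
        ∀ D' : Set V, Disconnects r (Wb ∪ Xb) V2 D' → D' ∩ Wb = ∅ →
          D.ncard ≤ D'.ncard) ↔
      (Disconnects r ({v | ∃ w ∈ Wb, r w v} ∪ Xb) V2 D ∧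
        ∀ D' : Set V, Disconnects r ({v | ∃ w ∈ Wb, r w v} ∪ Xb) V2 D' →
          D.ncard ≤ D'.ncard) := by
  constructor
  · rintro ⟨hdisc, hDW, hmin⟩
    refine ⟨lemA hDW hdisc, fun D' hD' => ?_⟩
    have hB := lemB hWV2 hD'
    have hC := lemC hWV2 hB
    have hempty : (D' \ Wb) ∩ Wb = ∅ := by
      ext x; simp only [Set.mem_inter_iff, Set.mem_diff, Set.mem_empty_iff_false,
        iff_false]; tauto
    calc D.ncard ≤ (D' \ Wb).ncard := hmin _ hC hempty
      _ ≤ D'.ncard := Set.ncard_le_ncard Set.diff_subset (Set.toFinite _)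
  · rintro ⟨hdisc, hmin⟩
    have hDW : D ∩ Wb = ∅ := by
      have h1 : D.ncard ≤ (D \ Wb).ncard := hmin _ (lemB hWV2 hdisc)
      have h2 : D \ Wb = D :=
        Set.eq_of_subset_of_ncard_le Set.diff_subset h1 (Set.toFinite _)
      ext x
      simp only [Set.mem_inter_iff, Set.mem_empty_iff_false, iff_false]
      rintro ⟨hxD, hxW⟩
      have hx : x ∈ D \ Wb := by rw [h2]; exact hxD
      exact hx.2 hxW
    refine ⟨lemC hWV2 hdisc, hDW, fun D' hD' hD'W => ?_⟩
    exact hmin _ (lemA hD'W hD')
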